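/- With the notation of the matrix-extracting procedure — N×N complex matrix u, partition I_1,…,I_{n+1} of {1,…,N} with |I_i| = d_i, Z^(p)_{ab}(u) := Σ_{r∈I_p} u_{ar} conj(u_{br}), and for k < l, Ω_R^{kl} := E_{lk} − E_{kl}, Ω_S^{kl} := √−1(E_{lk} + E_{kl}) — the following holds for all 1 ≤ p ≠ q ≤ n+1, all 1 ≤ r ≤ n+1, all 1 ≤ i,j ≤ d, and every N×N complex matrix u: Σ_{k ∈ I_p, l ∈ I_q} [ (d²/dt²)|_{t=0} Z^(r)_{ij}(u·exp(tΩ_R^{kl})) + (d²/dt²)|_{t=0} Z^(r)_{ij}(u·exp(tΩ_S^{kl})) ] = 1_{r=p} · 4 ( d_p Z^(q)_{ij}(u) − d_q Z^(p)_{ij}(u) ) − 1_{r=q} · 4 ( d_p Z^(q)_{ij}(u) − d_q Z^(p)_{ij}(u) ). -/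

import Mathlib

open Finset Matrix

lemma hasDerivAt_entry17 {N : ℕ} (u Ω B : Matrix (Fin N) (Fin N) ℂ) (a s : Fin N) (t : ℝ) :
    HasDerivAt (fun t : ℝ => (u * NormedSpace.exp (t • Ω) * B) a s)
      ((u * NormedSpace.exp (t • Ω) * (Ω * B)) a s) t := by
  letI : SeminormedRing (Matrix (Fin N) (Fin N) ℂ) := Matrix.linftyOpSemiNormedRing
  letI : NormedRing (Matrix (Fin N) (Fin N) ℂ) := Matrix.linftyOpNormedRing
  letI : NormedAlgebra ℝ (Matrix (Fin N) (Fin N) ℂ) := Matrix.linftyOpNormedAlgebra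
  have h := hasDerivAt_exp_smul_const (𝕂 := ℝ) Ω t
  have h2 := (h.const_mul u).mul_const B
  let e : Matrix (Fin N) (Fin N) ℂ →L[ℝ] ℂ :=
    LinearMap.toContinuousLinearMap (Matrix.entryLinearMap ℝ ℂ a s)
  have h3 := e.hasFDerivAt.comp_hasDerivAt t h2
  simp only [mul_assoc] at h3 ⊢
  exact h3

lemma hasDerivAt_entry17' {N : ℕ} (u Ω : Matrix (Fin N) (Fin N) ℂ) (a s : Fin N) (t : ℝ) :
    HasDerivAt (fun t : ℝ => (u * NormedSpace.exp (t • Ω)) a s)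
      ((u * NormedSpace.exp (t • Ω) * Ω) a s) t := by
  simpa using hasDerivAt_entry17 u Ω 1 a s t

lemma key17 {N : ℕ} (u Ω : Matrix (Fin N) (Fin N) ℂ) (S : Finset (Fin N)) (a b : Fin N) :
    iteratedDeriv 2 (fun t : ℝ => ∑ s ∈ S, (u * NormedSpace.exp (t • Ω)) a s
        * star ((u * NormedSpace.exp (t • Ω)) b s)) 0
    = ∑ s ∈ S, ((u * (Ω * Ω)) a s * star (u b s)
        + 2 * ((u * Ω) a s * star ((u * Ω) b s)) + u a s * star ((u * (Ω * Ω)) b s)) := by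
  have hd1 : deriv (fun t : ℝ => ∑ s ∈ S, (u * NormedSpace.exp (t • Ω)) a s
        * star ((u * NormedSpace.exp (t • Ω)) b s))
      = fun t : ℝ => ∑ s ∈ S, ((u * NormedSpace.exp (t • Ω) * Ω) a s
          * star ((u * NormedSpace.exp (t • Ω)) b s)
        + (u * NormedSpace.exp (t • Ω)) a s
          * star ((u * NormedSpace.exp (t • Ω) * Ω) b s)) := by
    funext t
    refine HasDerivAt.deriv ?_
    exact HasDerivAt.fun_sum fun s _ =>
      (hasDerivAt_entry17' u Ω a s t).mul ((hasDerivAt_entry17' u Ω b s t).star)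
  have hd2 : HasDerivAt (fun t : ℝ => ∑ s ∈ S, ((u * NormedSpace.exp (t • Ω) * Ω) a s
          * star ((u * NormedSpace.exp (t • Ω)) b s)
        + (u * NormedSpace.exp (t • Ω)) a s
          * star ((u * NormedSpace.exp (t • Ω) * Ω) b s)))
      (∑ s ∈ S, (((u * NormedSpace.exp ((0:ℝ) • Ω) * (Ω * Ω)) a s
          * star ((u * NormedSpace.exp ((0:ℝ) • Ω)) b s)
        + (u * NormedSpace.exp ((0:ℝ) • Ω) * Ω) a s
          * star ((u * NormedSpace.exp ((0:ℝ) • Ω) * Ω) b s))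
        + ((u * NormedSpace.exp ((0:ℝ) • Ω) * Ω) a s
          * star ((u * NormedSpace.exp ((0:ℝ) • Ω) * Ω) b s)
        + (u * NormedSpace.exp ((0:ℝ) • Ω)) a s
          * star ((u * NormedSpace.exp ((0:ℝ) • Ω) * (Ω * Ω)) b s)))) 0 := by
    exact HasDerivAt.fun_sum fun s _ =>
      ((hasDerivAt_entry17 u Ω Ω a s 0).mul ((hasDerivAt_entry17' u Ω b s 0).star)).add
        ((hasDerivAt_entry17' u Ω a s 0).mul ((hasDerivAt_entry17 u Ω Ω b s 0).star))
  rw [show (2:ℕ) = 1 + 1 from rfl, iteratedDeriv_succ, iteratedDeriv_one, hd1, hd2.deriv]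
  simp only [zero_smul, NormedSpace.exp_zero, mul_one]
  refine Finset.sum_congr rfl fun s _ => ?_
  ring

lemma mul_std17 {N : ℕ} (u : Matrix (Fin N) (Fin N) ℂ) (c : ℂ) (l k a s : Fin N) :
    (u * Matrix.single l k c) a s = if s = k then u a l * c else 0 := by
  simp [Matrix.mul_apply, Matrix.single, Matrix.of_apply, ite_and, eq_comm]

lemma inner17 {N : ℕ} (u ΩR ΩS : Matrix (Fin N) (Fin N) ℂ) (k l : Fin N) (hkl : k ≠ l)
    (hR : ΩR = Matrix.single l k (1:ℂ) - Matrix.single k l 1)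
    (hS : ΩS = Complex.I • (Matrix.single l k (1:ℂ) + Matrix.single k l 1))
    (S : Finset (Fin N)) (a b : Fin N) :
    (∑ s ∈ S, ((u * (ΩR * ΩR)) a s * star (u b s)
        + 2 * ((u * ΩR) a s * star ((u * ΩR) b s))
        + u a s * star ((u * (ΩR * ΩR)) b s)))
    + (∑ s ∈ S, ((u * (ΩS * ΩS)) a s * star (u b s)
        + 2 * ((u * ΩS) a s * star ((u * ΩS) b s))
        + u a s * star ((u * (ΩS * ΩS)) b s)))
    = (if k ∈ S then 4 * (u a l * star (u b l)) - 4 * (u a k * star (u b k)) else 0)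
      + (if l ∈ S then 4 * (u a k * star (u b k)) - 4 * (u a l * star (u b l)) else 0) := by
  have e1 : ∀ (v : Matrix (Fin N) (Fin N) ℂ) (a s : Fin N),
      (v * ΩR) a s = (if s = k then v a l else 0) - (if s = l then v a k else 0) := by
    intro v a s
    simp [hR, Matrix.mul_sub, Matrix.sub_apply, mul_std17]
  have e2 : ∀ (v : Matrix (Fin N) (Fin N) ℂ) (a s : Fin N),
      (v * ΩS) a s = Complex.I * ((if s = k then v a l else 0) + (if s = l then v a k else 0)) := by
    intro v a s
    simp [hS, Matrix.mul_smul, Matrix.mul_add, Matrix.smul_apply, Matrix.add_apply, mul_std17,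
      smul_eq_mul, mul_add, mul_comm]
  have step : ∀ s : Fin N,
      ((u * (ΩR * ΩR)) a s * star (u b s)
        + 2 * ((u * ΩR) a s * star ((u * ΩR) b s))
        + u a s * star ((u * (ΩR * ΩR)) b s))
      + ((u * (ΩS * ΩS)) a s * star (u b s)
        + 2 * ((u * ΩS) a s * star ((u * ΩS) b s))
        + u a s * star ((u * (ΩS * ΩS)) b s))
      = (if s = k then 4 * (u a l * star (u b l)) - 4 * (u a k * star (u b k)) else 0)
        + (if s = l then 4 * (u a k * star (u b k)) - 4 * (u a l * star (u b l)) else 0) := by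
    intro s
    rw [← mul_assoc u ΩR ΩR, ← mul_assoc u ΩS ΩS]
    by_cases hsk : s = k
    · subst hsk
      simp only [e1, e2, if_pos rfl, if_neg hkl, if_neg (Ne.symm hkl)]
      simp [star_mul', Complex.star_def, Complex.conj_I, hkl, Ne.symm hkl, star_sub, map_sub]
      ring_nf
      simp [Complex.I_sq]
      ring
    · by_cases hsl : s = l
      · subst hsl
        simp only [e1, e2, if_pos rfl, if_neg (Ne.symm hkl), if_neg hsk]
        simp [star_mul', Complex.star_def, Complex.conj_I, hkl, Ne.symm hkl, hsk]
        ring_nf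
        simp [Complex.I_sq]
        ring
      · simp [e1, e2, hsk, hsl]
  rw [← Finset.sum_add_distrib, Finset.sum_congr rfl (fun s _ => step s),
    Finset.sum_add_distrib, Finset.sum_ite_eq' S k, Finset.sum_ite_eq' S l]

/-- The extracted matrix entries `Z^(p)_{ab}(u) = Σ_{r ∈ I_p} u_{ar} conj(u_{br})`. -/
noncomputable def extractZ17 {N : ℕ} (d : ℕ) (hdN : d ≤ N) (I : Finset (Fin N))
    (u : Matrix (Fin N) (Fin N) ℂ) : Matrix (Fin d) (Fin d) ℂ :=
  Matrix.of fun a b => ∑ r ∈ I, u (Fin.castLE hdN a) r * star (u (Fin.castLE hdN b) r)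

/-- The action of
`L^{(pq)} = Σ_{k∈I_p, l∈I_q} (V_{R_{kl}}² + V_{S_{kl}}²)` on the entries of the extracted
matrices: the sum over `k ∈ I_p`, `l ∈ I_q` of the second derivatives at `t = 0` of
`t ↦ Z^(r)_{ij}(u·exp(tΩ))` along `Ω_R^{kl}` and `Ω_S^{kl}` equals
`1_{r=p}·4(d_p Z^(q)_{ij} - d_q Z^(p)_{ij}) - 1_{r=q}·4(d_p Z^(q)_{ij} - d_q Z^(p)_{ij})`. -/
theorem stmt_17 (N n d : ℕ) (hN : 1 ≤ N) (hdN : d ≤ N)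
    (I : Fin (n + 1) → Finset (Fin N)) (dd : Fin (n + 1) → ℕ)
    (hdisj : ∀ i j, i ≠ j → Disjoint (I i) (I j))
    (hcover : ∀ r, ∃ i, r ∈ I i)
    (hcard : ∀ i, (I i).card = dd i)
    (u : Matrix (Fin N) (Fin N) ℂ)
    (p q r : Fin (n + 1)) (hpq : p ≠ q) (i j : Fin d) :
    ∑ k ∈ I p, ∑ l ∈ I q,
      (iteratedDeriv 2 (fun t : ℝ => extractZ17 d hdN (I r)
          (u * NormedSpace.exp (t • (Matrix.single l k (1 : ℂ)
            - Matrix.single k l 1))) i j) 0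
        + iteratedDeriv 2 (fun t : ℝ => extractZ17 d hdN (I r)
          (u * NormedSpace.exp (t • (Complex.I • (Matrix.single l k (1 : ℂ)
            + Matrix.single k l 1)))) i j) 0)
      = (if r = p then (1 : ℂ) else 0)
          * (4 * ((dd p : ℂ) * extractZ17 d hdN (I q) u i j
              - (dd q : ℂ) * extractZ17 d hdN (I p) u i j))
        - (if r = q then (1 : ℂ) else 0)
          * (4 * ((dd p : ℂ) * extractZ17 d hdN (I q) u i j
              - (dd q : ℂ) * extractZ17 d hdN (I p) u i j)) := by
  have hd := hdisj p q hpq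
  have main : ∀ k ∈ I p, ∀ l ∈ I q,
      (iteratedDeriv 2 (fun t : ℝ => extractZ17 d hdN (I r)
          (u * NormedSpace.exp (t • (Matrix.single l k (1 : ℂ)
            - Matrix.single k l 1))) i j) 0
        + iteratedDeriv 2 (fun t : ℝ => extractZ17 d hdN (I r)
          (u * NormedSpace.exp (t • (Complex.I • (Matrix.single l k (1 : ℂ)
            + Matrix.single k l 1)))) i j) 0)
      = (if r = p then (1 : ℂ) else 0)
          * (4 * (u (Fin.castLE hdN i) l * star (u (Fin.castLE hdN j) l))
            - 4 * (u (Fin.castLE hdN i) k * star (u (Fin.castLE hdN j) k)))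
        + (if r = q then (1 : ℂ) else 0)
          * (4 * (u (Fin.castLE hdN i) k * star (u (Fin.castLE hdN j) k))
            - 4 * (u (Fin.castLE hdN i) l * star (u (Fin.castLE hdN j) l))) := by
    intro k hk l hl
    have hkl : k ≠ l := fun h => (Finset.disjoint_left.mp hd hk) (h ▸ hl)
    have conv1 : ∀ c : ℂ, (if k ∈ I r then c else 0) = (if r = p then (1:ℂ) else 0) * c := by
      intro c
      by_cases hrp : r = p
      · subst hrp; rw [if_pos hk, if_pos rfl, one_mul]
      · rw [if_neg (fun hkr => (Finset.disjoint_left.mp (hdisj r p hrp) hkr) hk),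
          if_neg hrp, zero_mul]
    have conv2 : ∀ c : ℂ, (if l ∈ I r then c else 0) = (if r = q then (1:ℂ) else 0) * c := by
      intro c
      by_cases hrq : r = q
      · subst hrq; rw [if_pos hl, if_pos rfl, one_mul]
      · rw [if_neg (fun hlr => (Finset.disjoint_left.mp (hdisj r q hrq) hlr) hl),
          if_neg hrq, zero_mul]
    simp only [extractZ17, Matrix.of_apply]
    rw [key17, key17, inner17 u _ _ k l hkl rfl rfl (I r)
      (Fin.castLE hdN i) (Fin.castLE hdN j), conv1, conv2]
  rw [Finset.sum_congr rfl (fun k hk => Finset.sum_congr rfl (fun l hl => main k hk l hl))]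
  simp only [extractZ17, Matrix.of_apply, Finset.sum_add_distrib, Finset.sum_sub_distrib,
    Finset.sum_const, nsmul_eq_mul, hcard, ← Finset.mul_sum]
  ring
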